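/- Under the hypotheses of the M=2 system (the twelve ODEs s·x0' = −η0·x0 − x1, s·x1' = −η1·x0 − x2, s·x2' = −η2·x0 − s·x0 + ξ0·x0 + ξ1·x1 + ξ2·x2, s·y2' = −ξ2·y2 + y1, s·y1' = −ξ1·y2 + y0, s·y0' = −ξ0·y2 + s·y2 + η0·y0 + η1·y1 + η2·y2, ξ0' = −x0·y0, ξ1' = −x0·y1, ξ2' = −x0·y2, η0' = −x0·y2, η1' = −x1·y2, η2' = −x2·y2 on (0,∞)), the function s·x0·y2 − (η0·ξ2 + η1 − ξ1 − η0) has zero derivative on (0,∞). -/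

import Mathlib

open Set

theorem stmt_10 (x0 x1 x2 y0 y1 y2 ξ0 ξ1 ξ2 η0 η1 η2 : ℝ → ℝ)
    (hx0 : ∀ s ∈ Ioi (0:ℝ), DifferentiableAt ℝ x0 s)
    (hx1 : ∀ s ∈ Ioi (0:ℝ), DifferentiableAt ℝ x1 s)
    (hx2 : ∀ s ∈ Ioi (0:ℝ), DifferentiableAt ℝ x2 s)
    (hy0 : ∀ s ∈ Ioi (0:ℝ), DifferentiableAt ℝ y0 s)
    (hy1 : ∀ s ∈ Ioi (0:ℝ), DifferentiableAt ℝ y1 s)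
    (hy2 : ∀ s ∈ Ioi (0:ℝ), DifferentiableAt ℝ y2 s)
    (hξ0 : ∀ s ∈ Ioi (0:ℝ), DifferentiableAt ℝ ξ0 s)
    (hξ1 : ∀ s ∈ Ioi (0:ℝ), DifferentiableAt ℝ ξ1 s)
    (hξ2 : ∀ s ∈ Ioi (0:ℝ), DifferentiableAt ℝ ξ2 s)
    (hη0 : ∀ s ∈ Ioi (0:ℝ), DifferentiableAt ℝ η0 s)
    (hη1 : ∀ s ∈ Ioi (0:ℝ), DifferentiableAt ℝ η1 s)
    (hη2 : ∀ s ∈ Ioi (0:ℝ), DifferentiableAt ℝ η2 s)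
    (e1 : ∀ s ∈ Ioi (0:ℝ), s * deriv x0 s = -η0 s * x0 s - x1 s)
    (e2 : ∀ s ∈ Ioi (0:ℝ), s * deriv x1 s = -η1 s * x0 s - x2 s)
    (e3 : ∀ s ∈ Ioi (0:ℝ), s * deriv x2 s =
      -η2 s * x0 s - s * x0 s + ξ0 s * x0 s + ξ1 s * x1 s + ξ2 s * x2 s)
    (e4 : ∀ s ∈ Ioi (0:ℝ), s * deriv y2 s = -ξ2 s * y2 s + y1 s)
    (e5 : ∀ s ∈ Ioi (0:ℝ), s * deriv y1 s = -ξ1 s * y2 s + y0 s)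
    (e6 : ∀ s ∈ Ioi (0:ℝ), s * deriv y0 s =
      -ξ0 s * y2 s + s * y2 s + η0 s * y0 s + η1 s * y1 s + η2 s * y2 s)
    (e7 : ∀ s ∈ Ioi (0:ℝ), deriv ξ0 s = -(x0 s * y0 s))
    (e8 : ∀ s ∈ Ioi (0:ℝ), deriv ξ1 s = -(x0 s * y1 s))
    (e9 : ∀ s ∈ Ioi (0:ℝ), deriv ξ2 s = -(x0 s * y2 s))
    (e10 : ∀ s ∈ Ioi (0:ℝ), deriv η0 s = -(x0 s * y2 s))
    (e11 : ∀ s ∈ Ioi (0:ℝ), deriv η1 s = -(x1 s * y2 s))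
    (e12 : ∀ s ∈ Ioi (0:ℝ), deriv η2 s = -(x2 s * y2 s)) :
    ∀ s ∈ Ioi (0:ℝ),
      deriv (fun t => t * x0 t * y2 t
        - (η0 t * ξ2 t + η1 t - ξ1 t - η0 t)) s = 0 := by
  intro s hs
  have hsne : s ≠ 0 := ne_of_gt hs
  have dx0 := hx0 s hs
  have dy1 := hy1 s hs
  have dy2 := hy2 s hs
  have dξ1 := hξ1 s hs
  have dξ2 := hξ2 s hs
  have dη0 := hη0 s hs
  have dη1 := hη1 s hs
  have hdx0 : deriv x0 s = (-η0 s * x0 s - x1 s) / s := by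
    field_simp; linarith [e1 s hs]
  have hdy2 : deriv y2 s = (-ξ2 s * y2 s + y1 s) / s := by
    field_simp; linarith [e4 s hs]
  rw [deriv_fun_sub (by fun_prop) (by fun_prop)]
  rw [deriv_fun_mul (by fun_prop) dy2, deriv_fun_mul (by fun_prop) dx0]
  rw [deriv_fun_sub (by fun_prop) dη0, deriv_fun_sub (by fun_prop) dξ1,
      deriv_fun_add (by fun_prop) dη1, deriv_fun_mul dη0 dξ2]
  rw [hdx0, hdy2, e8 s hs, e9 s hs, e10 s hs, e11 s hs, deriv_id'']
  field_simp
  ring
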